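/- Let p be a prime with p ≡ 2 or 3 (mod 5). Then the Pisano period π(p) divides 2(p + 1). -/

import Mathlib

/-- The Pisano period of the Fibonacci sequence modulo `k`:
the least positive `n` such that `F (m + n) ≡ F m (mod k)` for all `m`. -/
noncomputable def pisano (k : ℕ) : ℕ :=
  sInf {n | 0 < n ∧ ∀ m : ℕ, Nat.fib (m + n) ≡ Nat.fib m [MOD k]}

lemma ns2' : ¬ IsSquare ((2 : ℕ) : ZMod 5) := by decide
lemma ns3' : ¬ IsSquare ((3 : ℕ) : ZMod 5) := by decide

lemma five_not_square (p : ℕ) (hp : p.Prime) (h : p % 5 = 2 ∨ p % 5 = 3) (hp2 : p ≠ 2) :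
    ¬ IsSquare (5 : ZMod p) := by
  haveI : Fact p.Prime := ⟨hp⟩
  haveI : Fact (Nat.Prime 5) := ⟨by norm_num⟩
  have h1 : legendreSym p 5 = legendreSym 5 p :=
    legendreSym.quadratic_reciprocity_one_mod_four (by norm_num) hp2
  have hc : ((p : ℤ) : ZMod 5) = ((p % 5 : ℕ) : ZMod 5) := by
    rw [Int.cast_natCast, ZMod.natCast_mod]
  have h3 : legendreSym 5 (p : ℤ) = -1 := by
    rw [legendreSym.eq_neg_one_iff, hc]
    rcases h with h | h <;> rw [h]
    · exact ns2'
    · exact ns3'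
  have hneg : legendreSym p 5 = -1 := by rw [h1, h3]
  have := (legendreSym.eq_neg_one_iff (p := p) (a := 5)).mp hneg
  intro hsq
  exact this (by push_cast; exact hsq)

lemma fib_field {K : Type} [Field K] (p : ℕ) [Fact p.Prime] [CharP K p]
    (hpodd : Odd p) (s : K) (hs : s ^ 2 = 5) (hsp : s ^ p = -s) (hsne : s ≠ 0) :
    (Nat.fib (2 * (p + 1)) : K) = 0 ∧ (Nat.fib (2 * (p + 1) + 1) : K) = 1 := by
  have hp2 : p ≠ 2 := by rintro rfl; exact (by norm_num : ¬ Odd 2) hpodd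
  have h2K : (2 : K) ≠ 0 := by
    have : ((2 : ℕ) : K) ≠ 0 := by
      rw [Ne, CharP.cast_eq_zero_iff K p]
      exact fun hd => hp2 ((Nat.prime_dvd_prime_iff_eq (Fact.out) Nat.prime_two).mp hd)
    simpa using this
  set α : K := (1 + s) / 2 with hα
  set β : K := (1 - s) / 2 with hβ
  have hα2 : α ^ 2 = α + 1 := by
    rw [hα]; field_simp; linear_combination hs
  have hβ2 : β ^ 2 = β + 1 := by
    rw [hβ]; field_simp; linear_combination hs
  have hαβ : α * β = -1 := by
    rw [hα, hβ]; field_simp; linear_combination -hs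
  have hsub : α - β = s := by rw [hα, hβ]; field_simp; ring
  have h2p : (2 : K) ^ p = 2 := by
    have := map_natCast (frobenius K p) 2
    simpa [frobenius_def] using this
  have hαp : α ^ p = β := by
    rw [hα, hβ, div_pow, add_pow_char, one_pow, hsp, h2p]
    ring_nf
  have hβp : β ^ p = α := by
    have h1s : (1 - s) ^ p = 1 + s := by
      have := add_pow_char (1 : K) (-s) p
      rw [hpodd.neg_pow, hsp, one_pow] at this
      rw [sub_eq_add_neg, this]
      ring
    rw [hα, hβ, div_pow, h1s, h2p]
  have hαN : α ^ (2 * (p + 1)) = 1 := by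
    have hh : α ^ (p + 1) = -1 := by rw [pow_succ, hαp, mul_comm]; exact hαβ
    rw [mul_comm 2, pow_mul, hh]; ring
  have hβN : β ^ (2 * (p + 1)) = 1 := by
    have hh : β ^ (p + 1) = -1 := by rw [pow_succ, hβp, mul_comm]; rw [mul_comm] at hαβ; exact hαβ
    rw [mul_comm 2, pow_mul, hh]; ring
  have binet : ∀ n : ℕ, (Nat.fib n : K) * s = α ^ n - β ^ n := by
    intro n
    induction n using Nat.twoStepInduction with
    | zero => simp
    | one => simpa using hsub.symm
    | more n ih1 ih2 =>
        have eα : α ^ (n + 2) = α ^ (n + 1) + α ^ n := by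
          calc α ^ (n + 2) = α ^ n * α ^ 2 := by ring
            _ = α ^ n * (α + 1) := by rw [hα2]
            _ = α ^ (n + 1) + α ^ n := by ring
        have eβ : β ^ (n + 2) = β ^ (n + 1) + β ^ n := by
          calc β ^ (n + 2) = β ^ n * β ^ 2 := by ring
            _ = β ^ n * (β + 1) := by rw [hβ2]
            _ = β ^ (n + 1) + β ^ n := by ring
        rw [Nat.fib_add_two, eα, eβ]
        push_cast
        linear_combination ih1 + ih2
  constructor
  · have hb := binet (2 * (p + 1))
    rw [hαN, hβN, sub_self] at hb
    exact (mul_eq_zero.mp hb).resolve_right hsne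
  · have hb := binet (2 * (p + 1) + 1)
    have he : α ^ (2 * (p + 1) + 1) - β ^ (2 * (p + 1) + 1) = s := by
      rw [pow_succ, pow_succ, hαN, hβN, one_mul, one_mul, hsub]
    rw [he] at hb
    exact mul_right_cancel₀ hsne (hb.trans (one_mul s).symm)

lemma fib_key (p : ℕ) (hp : p.Prime) (h : p % 5 = 2 ∨ p % 5 = 3) (hp2 : p ≠ 2) :
    (Nat.fib (2 * (p + 1)) : ZMod p) = 0 ∧ (Nat.fib (2 * (p + 1) + 1) : ZMod p) = 1 := by
  haveI : Fact p.Prime := ⟨hp⟩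
  have h5ns := five_not_square p hp h hp2
  have h5 : (5 : ZMod p) ≠ 0 := fun h0 => h5ns (h0 ▸ IsSquare.zero)
  have heuler : (5 : ZMod p) ^ (p / 2) = -1 := by
    have hneg : legendreSym p 5 = -1 := by
      rw [legendreSym.eq_neg_one_iff]
      intro hsq
      exact h5ns (by push_cast at hsq; exact hsq)
    have := (legendreSym.eq_pow p 5).symm
    rw [hneg] at this
    push_cast at this
    exact this
  letI K := AlgebraicClosure (ZMod p)
  haveI : CharP K p := charP_of_injective_algebraMap (algebraMap (ZMod p) K).injective p
  have hmap : ∀ n : ℕ, ((n : ℕ) : K) = algebraMap (ZMod p) K ((n : ℕ) : ZMod p) :=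
    fun n => (map_natCast _ n).symm
  obtain ⟨s, hs⟩ := IsAlgClosed.exists_pow_nat_eq (5 : K) (n := 2) (by norm_num)
  have h5cast : (5 : K) = algebraMap (ZMod p) K (5 : ZMod p) := by
    have := hmap 5; push_cast at this; exact this
  have h5K : (5 : K) ≠ 0 := by
    rw [h5cast]
    simpa using h5
  have hsne : s ≠ 0 := fun h0 => h5K (by rw [← hs, h0]; ring)
  have hpodd : Odd p := hp.odd_of_ne_two hp2
  have hsp : s ^ p = -s := by
    obtain ⟨t, ht⟩ := hpodd
    have ht2 : t = p / 2 := by omega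
    calc s ^ p = (s ^ 2) ^ t * s := by rw [← pow_mul, ← pow_succ]; conv_rhs => rw [← ht]
      _ = algebraMap (ZMod p) K ((5 : ZMod p) ^ (p / 2)) * s := by
          rw [hs, h5cast, ← map_pow, ht2]
      _ = -s := by rw [heuler, map_neg, map_one]; ring
  have key := fib_field p hpodd s hs hsp hsne
  have hinj := (algebraMap (ZMod p) K).injective
  constructor
  · apply hinj
    rw [map_zero, ← hmap]
    exact key.1
  · apply hinj
    rw [map_one, ← hmap]
    exact key.2

/-- If `fib N ≡ 0` and `fib (N+1) ≡ 1` mod `k`, then `N` is a period. -/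
lemma fib_period_of (k N : ℕ) (h0 : Nat.fib N ≡ 0 [MOD k])
    (h1 : Nat.fib (N + 1) ≡ 1 [MOD k]) :
    ∀ m : ℕ, Nat.fib (m + N) ≡ Nat.fib m [MOD k] := by
  intro m
  cases m with
  | zero => simpa using h0
  | succ m =>
      have : Nat.fib (m + N + 1) = Nat.fib m * Nat.fib N + Nat.fib (m + 1) * Nat.fib (N + 1) :=
        Nat.fib_add m N
      calc Nat.fib (m + 1 + N) = Nat.fib m * Nat.fib N + Nat.fib (m + 1) * Nat.fib (N + 1) := by
            rw [← this]; ring_nf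
        _ ≡ Nat.fib m * 0 + Nat.fib (m + 1) * 1 [MOD k] :=
            Nat.ModEq.add (h0.mul_left _) (h1.mul_left _)
        _ = Nat.fib (m + 1) := by ring

lemma pisano_dvd (k N : ℕ) (hN : 0 < N)
    (hper : ∀ m : ℕ, Nat.fib (m + N) ≡ Nat.fib m [MOD k]) : pisano k ∣ N := by
  set S : Set ℕ := {n | 0 < n ∧ ∀ m : ℕ, Nat.fib (m + n) ≡ Nat.fib m [MOD k]} with hS
  have hNS : N ∈ S := ⟨hN, hper⟩
  have hd : pisano k ∈ S := Nat.sInf_mem ⟨N, hNS⟩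
  set d := pisano k
  obtain ⟨hd0, hdper⟩ := hd
  -- multiples of d are periods
  have hmul : ∀ j m : ℕ, Nat.fib (m + j * d) ≡ Nat.fib m [MOD k] := by
    intro j
    induction j with
    | zero => simp [Nat.ModEq.refl]
    | succ j ih =>
        intro m
        have : m + (j + 1) * d = m + j * d + d := by ring
        rw [this]
        exact (hdper (m + j * d)).trans (ih m)
  by_contra hdvd
  have hr0 : 0 < N % d := Nat.pos_of_ne_zero fun h => hdvd (Nat.dvd_of_mod_eq_zero h)
  have hrS : N % d ∈ S := by
    refine ⟨hr0, fun m => ?_⟩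
    have he : m + N % d + N / d * d = m + N := by
      rw [Nat.add_assoc, Nat.mod_add_div']
    have := hmul (N / d) (m + N % d)
    rw [he] at this
    exact this.symm.trans (hper m)
  have : d ≤ N % d := Nat.sInf_le hrS
  exact absurd (Nat.mod_lt _ hd0) (not_lt.mpr this)

theorem pisano_dvd_two_mul_add_one (p : ℕ) (hp : p.Prime)
    (h : p % 5 = 2 ∨ p % 5 = 3) :
    pisano p ∣ 2 * (p + 1) := by
  have hN : 0 < 2 * (p + 1) := by positivity
  by_cases hp2 : p = 2
  · subst hp2
    exact pisano_dvd 2 _ (by norm_num) (fib_period_of 2 _ (by decide) (by decide))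
  · obtain ⟨h0, h1⟩ := fib_key p hp h hp2
    refine pisano_dvd p _ hN (fib_period_of p _ ?_ ?_)
    · exact (ZMod.natCast_eq_natCast_iff _ _ _).mp (by push_cast; exact h0)
    · exact (ZMod.natCast_eq_natCast_iff _ _ _).mp (by push_cast; exact h1)
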